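/- Let θ : ℕ → ℝ be positive and nondecreasing with n/θ_n → ∞ and θ_n²/n → 0 as n → ∞. Then Γ(θ_n)·(θ_n)_n/n! = n^{θ_n−1}·(1 + θ_n(θ_n−1)/(2n)) + O(n^{θ_n−1}·θ_n⁴/n²); that is, there exist a constant C and an index N such that for all n ≥ N, |Γ(θ_n)·(θ_n)_n/n! − n^{θ_n−1}·(1 + θ_n(θ_n−1)/(2n))| ≤ C·n^{θ_n−1}·θ_n⁴/n². -/

import Mathlib

open Filter Finset

noncomputable def Pf (t : ℝ) (m : ℕ) : ℝ :=
  Real.Gamma t * (∏ i ∈ Finset.range m, (t + i)) / (Nat.factorial m) / (m : ℝ) ^ (t - 1)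

noncomputable def gt' (t : ℝ) (k : ℕ) : ℝ :=
  t * Real.log (1 + 1 / k) - Real.log (1 + t / k)

lemma prod_pos' {t : ℝ} (ht : 0 < t) (m : ℕ) : 0 < ∏ i ∈ Finset.range m, (t + i) :=
  Finset.prod_pos fun i _ => by positivity

lemma Pf_pos {t : ℝ} (ht : 0 < t) {m : ℕ} (hm : 1 ≤ m) : 0 < Pf t m := by
  have h1 : (0:ℝ) < m := by exact_mod_cast hm
  have := prod_pos' ht m
  have hg := Real.Gamma_pos_of_pos ht
  have hf : (0:ℝ) < (Nat.factorial m : ℝ) := by exact_mod_cast Nat.factorial_pos m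
  have : (0:ℝ) < (m:ℝ) ^ (t-1) := Real.rpow_pos_of_pos h1 _
  unfold Pf
  positivity

lemma Pf_eq {t : ℝ} (ht : 0 < t) {m : ℕ} (hm : 1 ≤ m) :
    Pf t m = Real.Gamma t / Real.GammaSeq t m * ((m : ℝ) / (t + m)) := by
  have h1 : (0:ℝ) < m := by exact_mod_cast hm
  have hq := prod_pos' ht m
  have hf : (0:ℝ) < (Nat.factorial m : ℝ) := by exact_mod_cast Nat.factorial_pos m
  have htm : (0:ℝ) < t + m := by positivity
  have hr : (0:ℝ) < (m:ℝ) ^ (t-1) := Real.rpow_pos_of_pos h1 _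
  have hrt : (0:ℝ) < (m:ℝ) ^ t := Real.rpow_pos_of_pos h1 _
  have hrw : ((m:ℝ)) ^ (t - 1) = (m:ℝ) ^ t / (m:ℝ) := by
    rw [Real.rpow_sub h1, Real.rpow_one]
  rw [Pf, Real.GammaSeq, Finset.prod_range_succ, hrw]
  field_simp

lemma Pf_tendsto {t : ℝ} (ht : 0 < t) : Tendsto (Pf t) atTop (nhds 1) := by
  have hg := Real.Gamma_pos_of_pos ht
  have h1 : Tendsto (fun m : ℕ => Real.Gamma t / Real.GammaSeq t m) atTop
      (nhds (Real.Gamma t / Real.Gamma t)) :=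
    (tendsto_const_nhds).div (Real.GammaSeq_tendsto_Gamma t) hg.ne'
  rw [div_self hg.ne'] at h1
  have h2 : Tendsto (fun m : ℕ => t / (t + m)) atTop (nhds 0) := by
    apply Tendsto.div_atTop (tendsto_const_nhds)
    exact tendsto_atTop_add_const_left _ _ tendsto_natCast_atTop_atTop
  have h3 : Tendsto (fun m : ℕ => (m : ℝ) / (t + m)) atTop (nhds 1) := by
    have := (tendsto_const_nhds (x := (1:ℝ)) (f := atTop)).sub h2
    rw [sub_zero] at this
    apply this.congr'
    filter_upwards [eventually_ge_atTop 1] with m hm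
    have h1m : (0:ℝ) < m := by exact_mod_cast hm
    have : (0:ℝ) < t + m := by positivity
    field_simp
    ring
  have := h1.mul h3
  rw [one_mul] at this
  apply this.congr'
  filter_upwards [eventually_ge_atTop 1] with m hm
  exact (Pf_eq ht hm).symm

lemma log_Pf {t : ℝ} (ht : 0 < t) {m : ℕ} (hm : 1 ≤ m) :
    Real.log (Pf t m) = Real.log (Real.Gamma t) +
      Real.log (∏ i ∈ Finset.range m, (t + i)) - Real.log (Nat.factorial m)
      - (t - 1) * Real.log m := by
  have h1 : (0:ℝ) < m := by exact_mod_cast hm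
  have hq := prod_pos' ht m
  have hf : (0:ℝ) < (Nat.factorial m : ℝ) := by exact_mod_cast Nat.factorial_pos m
  have hg := Real.Gamma_pos_of_pos ht
  rw [Pf, Real.log_div (by positivity) (by positivity),
    Real.log_div (by positivity) hf.ne', Real.log_mul hg.ne' hq.ne',
    Real.log_rpow h1]

lemma log_Pf_step {t : ℝ} (ht : 0 < t) {m : ℕ} (hm : 1 ≤ m) :
    Real.log (Pf t m) = Real.log (Pf t (m + 1)) + gt' t m := by
  have h1 : (0:ℝ) < m := by exact_mod_cast hm
  have htm : (0:ℝ) < t + m := by positivity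
  have hm1 : (0:ℝ) < (m:ℝ) + 1 := by positivity
  rw [log_Pf ht hm, log_Pf ht (by omega : 1 ≤ m + 1), gt']
  have e1 : Real.log (1 + 1 / (m:ℝ)) = Real.log ((m:ℝ) + 1) - Real.log m := by
    rw [← Real.log_div hm1.ne' h1.ne']
    congr 1
    field_simp
  have e2 : Real.log (1 + t / (m:ℝ)) = Real.log (t + (m:ℝ)) - Real.log m := by
    rw [← Real.log_div htm.ne' h1.ne']
    congr 1
    field_simp
    ring
  have e3 : Real.log (∏ i ∈ Finset.range (m+1), (t + i)) =
      Real.log (∏ i ∈ Finset.range m, (t + i)) + Real.log (t + m) := by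
    rw [Finset.prod_range_succ, Real.log_mul (prod_pos' ht m).ne' htm.ne']
  have e4 : ((Nat.factorial (m+1) : ℝ)) = ((m:ℝ) + 1) * (Nat.factorial m : ℝ) := by
    push_cast [Nat.factorial_succ]; ring
  push_cast
  rw [e1, e2, e3, e4, Real.log_mul hm1.ne' (by exact_mod_cast (Nat.factorial_pos m).ne')]
  ring

lemma log_Pf_telescope {t : ℝ} (ht : 0 < t) {n m : ℕ} (hn : 1 ≤ n) (hnm : n ≤ m) :
    Real.log (Pf t n) = Real.log (Pf t m) + ∑ k ∈ Finset.Ico n m, gt' t k := by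
  induction m, hnm using Nat.le_induction with
  | base => simp
  | succ m hnm ih =>
      rw [Finset.sum_Ico_succ_top hnm, ih, log_Pf_step ht (le_trans hn hnm)]
      ring

lemma log_quad {x : ℝ} (h0 : 0 ≤ x) (h1 : x ≤ 1/2) :
    |Real.log (1 + x) - x + x ^ 2 / 2| ≤ 2 * x ^ 3 := by
  have hx : |(-x)| < 1 := by rw [abs_neg, abs_of_nonneg h0]; linarith
  have := Real.abs_log_sub_add_sum_range_le hx 2
  have hs : (∑ i ∈ Finset.range 2, (-x) ^ (i + 1) / (i + 1)) = -x + x^2/2 := by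
    simp [Finset.sum_range_succ]
    ring
  rw [hs, sub_neg_eq_add] at this
  have habs : |(-x)| = x := by rw [abs_neg, abs_of_nonneg h0]
  rw [habs] at this
  have h2 : x ^ (2+1) / (1 - x) ≤ 2 * x ^ 3 := by
    rw [div_le_iff₀ (by linarith)]
    have : x ^ (2+1) = x ^ 3 := rfl
    nlinarith [pow_nonneg h0 3, pow_nonneg h0 4]
  calc |Real.log (1 + x) - x + x ^ 2 / 2| = |(-x + x^2/2) + Real.log (1+x)| := by
        congr 1; ring
      _ ≤ x ^ (2+1) / (1 - x) := this
      _ ≤ 2 * x ^ 3 := h2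

lemma gu_bound {t u : ℝ} (ht : 0 < t) (hu : 0 < u) (hu2 : u ≤ 1/2) (htu : t * u ≤ 1/2) :
    |t * Real.log (1 + u) - Real.log (1 + t * u) - t * (t - 1) / 2 * (u ^ 2 / (1 + u))| ≤
      (3 * t + t ^ 2 + 2 * t ^ 3) * u ^ 3 := by
  have h1u : (0:ℝ) < 1 + u := by linarith
  set A := Real.log (1 + u) - u + u ^ 2 / 2 with hAdef
  set B := Real.log (1 + t * u) - t * u + (t * u) ^ 2 / 2 with hBdef
  have hA : |A| ≤ 2 * u ^ 3 := log_quad hu.le hu2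
  have hB : |B| ≤ 2 * (t * u) ^ 3 := log_quad (by positivity) htu
  have key : t * Real.log (1 + u) - Real.log (1 + t * u) - t * (t - 1) / 2 * (u ^ 2 / (1 + u)) =
      t * A - B + (t ^ 2 - t) / 2 * (u ^ 3 / (1 + u)) := by
    rw [hAdef, hBdef]
    field_simp
    ring
  have hc : |(t ^ 2 - t) / 2 * (u ^ 3 / (1 + u))| ≤ (t ^ 2 + t) / 2 * u ^ 3 := by
    rw [abs_mul]
    have h1 : |(t ^ 2 - t) / 2| ≤ (t ^ 2 + t) / 2 := by
      rw [abs_le]; constructor <;> nlinarith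
    have h2 : |u ^ 3 / (1 + u)| ≤ u ^ 3 := by
      rw [abs_of_nonneg (by positivity)]
      exact div_le_self (by positivity) (by linarith)
    have := mul_le_mul h1 h2 (abs_nonneg _) (by positivity)
    linarith
  have hTA : |t * A| ≤ 2 * t * u ^ 3 := by
    rw [abs_mul, abs_of_pos ht]
    nlinarith [abs_nonneg A]
  rw [key]
  have t1 : |t * A - B + (t ^ 2 - t) / 2 * (u ^ 3 / (1 + u))| ≤
      |t * A - B| + |(t ^ 2 - t) / 2 * (u ^ 3 / (1 + u))| := abs_add_le _ _
  have t2 : |t * A - B| ≤ |t * A| + |B| := abs_sub _ _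
  have hu3 : (0:ℝ) < u ^ 3 := by positivity
  nlinarith [t1, t2, hTA, hB, hc]

lemma gt'_bound {t : ℝ} (ht : 0 < t) {k : ℕ} (hk : 2 ≤ k) (htk : 2 * t ≤ (k : ℝ)) :
    |gt' t k - t * (t - 1) / 2 * (1 / (k : ℝ) - 1 / ((k : ℝ) + 1))| ≤
      (3 * t + t ^ 2 + 2 * t ^ 3) * (1 / (k : ℝ) ^ 3) := by
  have hK : (2:ℝ) ≤ (k:ℝ) := by exact_mod_cast hk
  have hK0 : (0:ℝ) < (k:ℝ) := by linarith
  have hu : (0:ℝ) < 1 / (k:ℝ) := by positivity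
  have hu2 : 1 / (k:ℝ) ≤ 1 / 2 := by
    rw [div_le_div_iff₀ hK0 two_pos]; linarith
  have htu : t * (1 / (k:ℝ)) ≤ 1 / 2 := by
    rw [mul_one_div, div_le_div_iff₀ hK0 two_pos]; linarith
  have h := gu_bound ht hu hu2 htu
  have e1 : gt' t k = t * Real.log (1 + 1 / (k:ℝ)) - Real.log (1 + t * (1 / (k:ℝ))) := by
    rw [gt', mul_one_div]
  have e2 : (1 / (k:ℝ)) ^ 2 / (1 + 1 / (k:ℝ)) = 1 / (k:ℝ) - 1 / ((k:ℝ) + 1) := by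
    field_simp
    ring
  have e3 : (1 / (k:ℝ)) ^ 3 = 1 / (k:ℝ) ^ 3 := by
    rw [div_pow, one_pow]
  rw [e1, ← e2, ← e3]
  exact h

lemma sum_telescope_Ico (F : ℕ → ℝ) {n m : ℕ} (h : n ≤ m) :
    ∑ k ∈ Finset.Ico n m, (F k - F (k + 1)) = F n - F m := by
  induction m, h using Nat.le_induction with
  | base => simp
  | succ m hnm ih => rw [Finset.sum_Ico_succ_top hnm, ih]; ring

lemma sum_cube_bound {n m : ℕ} (hn : 2 ≤ n) (hnm : n ≤ m) :
    ∑ k ∈ Finset.Ico n m, 1 / (k : ℝ) ^ 3 ≤ 1 / (n : ℝ) ^ 2 := by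
  set G : ℕ → ℝ := fun k => 1 / (((k:ℝ) - 1) * k) with hG
  have hN : (2:ℝ) ≤ (n:ℝ) := by exact_mod_cast hn
  have hstep : ∀ k ∈ Finset.Ico n m, 1 / (k : ℝ) ^ 3 ≤ (1/2) * (G k - G (k+1)) := by
    intro k hk
    have hk2 : 2 ≤ k := le_trans hn (Finset.mem_Ico.mp hk).1
    have hK : (2:ℝ) ≤ (k:ℝ) := by exact_mod_cast hk2
    have e : (1/2) * (G k - G (k+1)) = 1 / (((k:ℝ) - 1) * k * ((k:ℝ) + 1)) := by
      rw [hG]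
      push_cast
      have h1 : ((k:ℝ) - 1) ≠ 0 := by linarith
      have h2 : ((k:ℝ)) ≠ 0 := by linarith
      have h3 : ((k:ℝ) + 1) ≠ 0 := by linarith
      field_simp
      rw [add_sub_cancel_right, mul_div_cancel_left₀ _ h2]; ring
    rw [e]
    apply one_div_le_one_div_of_le
    · have := mul_pos (mul_pos (by linarith : (0:ℝ) < (k:ℝ) - 1)
        (by linarith : (0:ℝ) < (k:ℝ))) (by linarith : (0:ℝ) < (k:ℝ) + 1)
      linarith
    · nlinarith
  calc ∑ k ∈ Finset.Ico n m, 1 / (k : ℝ) ^ 3 ≤ ∑ k ∈ Finset.Ico n m, (1/2) * (G k - G (k+1)) :=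
        Finset.sum_le_sum hstep
    _ = (1/2) * (G n - G m) := by rw [← Finset.mul_sum, sum_telescope_Ico G hnm]
    _ ≤ 1 / (n : ℝ) ^ 2 := by
        have hM : (2:ℝ) ≤ (m:ℝ) := le_trans hN (by exact_mod_cast hnm)
        have hGm : 0 ≤ G m := by
          rw [hG]
          apply div_nonneg zero_le_one
          nlinarith
        have e : (1/2) * G n = 1 / (2 * (((n:ℝ) - 1) * n)) := by
          rw [hG]
          have h0 : ((n:ℝ) - 1) * (n:ℝ) ≠ 0 :=
            (mul_pos (by linarith : (0:ℝ) < (n:ℝ) - 1) (by linarith : (0:ℝ) < (n:ℝ))).ne'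
          field_simp
        have h2 : 1 / (2 * (((n:ℝ) - 1) * n)) ≤ 1 / (n : ℝ) ^ 2 :=
          one_div_le_one_div_of_le (by nlinarith) (by nlinarith)
        nlinarith

lemma sum_gt_bound {t : ℝ} (ht : 0 < t) {n m : ℕ} (hn : 2 ≤ n) (hnm : n ≤ m)
    (htn : 2 * t ≤ (n : ℝ)) :
    |∑ k ∈ Finset.Ico n m, gt' t k - t * (t - 1) / 2 * (1 / (n : ℝ) - 1 / (m : ℝ))| ≤
      (3 * t + t ^ 2 + 2 * t ^ 3) / (n : ℝ) ^ 2 := by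
  have htel : (1 / (n : ℝ) - 1 / (m : ℝ)) =
      ∑ k ∈ Finset.Ico n m, (1 / (k : ℝ) - 1 / ((k : ℝ) + 1)) := by
    rw [← sum_telescope_Ico (fun k => 1 / (k : ℝ)) hnm]
    apply Finset.sum_congr rfl
    intro k _
    push_cast
    ring
  rw [htel, Finset.mul_sum, ← Finset.sum_sub_distrib]
  have hc : (0:ℝ) ≤ 3 * t + t ^ 2 + 2 * t ^ 3 := by positivity
  calc |∑ k ∈ Finset.Ico n m, (gt' t k - t * (t - 1) / 2 * (1 / (k:ℝ) - 1 / ((k:ℝ) + 1)))|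
      ≤ ∑ k ∈ Finset.Ico n m, |gt' t k - t * (t - 1) / 2 * (1 / (k:ℝ) - 1 / ((k:ℝ) + 1))| :=
        Finset.abs_sum_le_sum_abs _ _
    _ ≤ ∑ k ∈ Finset.Ico n m, (3 * t + t ^ 2 + 2 * t ^ 3) * (1 / (k : ℝ) ^ 3) := by
        apply Finset.sum_le_sum
        intro k hk
        have hk2 : 2 ≤ k := le_trans hn (Finset.mem_Ico.mp hk).1
        have hkn : (n:ℝ) ≤ (k:ℝ) := by exact_mod_cast (Finset.mem_Ico.mp hk).1
        exact gt'_bound ht hk2 (by linarith)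
    _ = (3 * t + t ^ 2 + 2 * t ^ 3) * ∑ k ∈ Finset.Ico n m, 1 / (k : ℝ) ^ 3 := by
        rw [Finset.mul_sum]
    _ ≤ (3 * t + t ^ 2 + 2 * t ^ 3) * (1 / (n : ℝ) ^ 2) :=
        mul_le_mul_of_nonneg_left (sum_cube_bound hn hnm) hc
    _ = (3 * t + t ^ 2 + 2 * t ^ 3) / (n : ℝ) ^ 2 := by rw [mul_one_div]

lemma log_Pf_bound {t : ℝ} (ht : 0 < t) {n : ℕ} (hn : 2 ≤ n) (htn : 2 * t ≤ (n : ℝ)) :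
    |Real.log (Pf t n) - t * (t - 1) / (2 * n)| ≤ (3 * t + t ^ 2 + 2 * t ^ 3) / (n : ℝ) ^ 2 := by
  have hlog : Tendsto (fun m => Real.log (Pf t m)) atTop (nhds 0) := by
    have := (Pf_tendsto ht).log one_ne_zero
    rwa [Real.log_one] at this
  have hten : Tendsto
      (fun m : ℕ => |Real.log (Pf t n) - Real.log (Pf t m) -
        t * (t - 1) / 2 * (1 / (n : ℝ) - 1 / (m : ℝ))|) atTop
      (nhds |Real.log (Pf t n) - 0 - t * (t - 1) / 2 * (1 / (n : ℝ) - 0)|) := by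
    apply Tendsto.abs
    exact (tendsto_const_nhds.sub hlog).sub
      ((tendsto_const_nhds.sub tendsto_one_div_atTop_nhds_zero_nat).const_mul _)
  have heq : |Real.log (Pf t n) - 0 - t * (t - 1) / 2 * (1 / (n : ℝ) - 0)| =
      |Real.log (Pf t n) - t * (t - 1) / (2 * n)| := by
    rw [sub_zero, sub_zero, mul_one_div]
    congr 2
    ring
  rw [← heq]
  apply le_of_tendsto hten
  filter_upwards [eventually_ge_atTop n] with m hm
  have e := log_Pf_telescope ht (by omega : 1 ≤ n) hm
  have e2 : Real.log (Pf t n) - Real.log (Pf t m) = ∑ k ∈ Finset.Ico n m, gt' t k := by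
    rw [e]; ring
  rw [e2]
  exact sum_gt_bound ht hn hm htn

lemma sq_le_of_abs_le' {x a : ℝ} (h : |x| ≤ a) : x ^ 2 ≤ a ^ 2 := by
  nlinarith [abs_nonneg x, sq_abs x]

lemma add_sq_le' (a b : ℝ) : (a + b) ^ 2 ≤ 2 * a ^ 2 + 2 * b ^ 2 := by
  nlinarith [sq_nonneg (a - b)]

set_option maxHeartbeats 2000000 in
theorem stmt_12 (θ : ℕ → ℝ) (hpos : ∀ n, 0 < θ n) (hmono : Monotone θ)
    (hA : Tendsto (fun n : ℕ => (n : ℝ) / θ n) atTop atTop)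
    (hsq : Tendsto (fun n : ℕ => θ n ^ 2 / n) atTop (nhds 0)) :
    ∃ C : ℝ, ∃ N : ℕ, ∀ n ≥ N,
      |Real.Gamma (θ n) * (∏ i ∈ Finset.range n, (θ n + i)) / (Nat.factorial n) -
          (n : ℝ) ^ (θ n - 1) * (1 + θ n * (θ n - 1) / (2 * n))| ≤
        C * ((n : ℝ) ^ (θ n - 1) * θ n ^ 4 / (n : ℝ) ^ 2) := by
  obtain ⟨θ0, hθ0def⟩ : ∃ c : ℝ, c = θ 0 := ⟨_, rfl⟩
  have hθ0 : 0 < θ0 := hθ0def ▸ hpos 0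
  obtain ⟨c₁, hc₁def⟩ : ∃ c : ℝ, c = 3 / θ0 ^ 2 + 1 / θ0 + 2 := ⟨_, rfl⟩
  have hc₁ : 0 < c₁ := by rw [hc₁def]; positivity
  obtain ⟨K, hKdef⟩ : ∃ c : ℝ, c = (1 + 1 / θ0) / 2 := ⟨_, rfl⟩
  have hK : 0 < K := by rw [hKdef]; positivity
  obtain ⟨δ, hδdef⟩ : ∃ c : ℝ, c = min 1 (1 / (K + c₁ / 2 + 1)) := ⟨_, rfl⟩
  have hδ : 0 < δ := by
    rw [hδdef]
    exact lt_min one_pos (by positivity)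
  obtain ⟨C, hCdef⟩ : ∃ c : ℝ, c = 2 * K ^ 2 + 2 * c₁ ^ 2 + c₁ / θ0 := ⟨_, rfl⟩
  refine ⟨C, ?_⟩
  have hev : ∀ᶠ n in (atTop : Filter ℕ),
      |Real.Gamma (θ n) * (∏ i ∈ Finset.range n, (θ n + i)) / (Nat.factorial n) -
          (n : ℝ) ^ (θ n - 1) * (1 + θ n * (θ n - 1) / (2 * n))| ≤
        C * ((n : ℝ) ^ (θ n - 1) * θ n ^ 4 / (n : ℝ) ^ 2) := by
    filter_upwards [hA.eventually_ge_atTop 2, hsq.eventually (eventually_le_nhds hδ),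
      eventually_ge_atTop 2] with n h1 h2 h3
    obtain ⟨t, htdef⟩ : ∃ c : ℝ, c = θ n := ⟨_, rfl⟩
    rw [← htdef] at h1 h2 ⊢
    have ht : 0 < t := htdef ▸ hpos n
    have htθ0 : θ0 ≤ t := by rw [htdef, hθ0def]; exact hmono (Nat.zero_le n)
    have hnR : (2:ℝ) ≤ (n:ℝ) := by exact_mod_cast h3
    have hn0 : (0:ℝ) < (n:ℝ) := by linarith
    have hnt : 2 * t ≤ (n:ℝ) := by
      have := (le_div_iff₀ ht).mp h1
      linarith
    -- bound on log
    have hE := log_Pf_bound ht h3 hnt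
    have ht2 : θ0 ^ 2 ≤ t ^ 2 := by nlinarith
    have hb : 3 * t + t ^ 2 + 2 * t ^ 3 ≤ c₁ * t ^ 3 := by
      have hb1 : 3 * t ≤ 3 / θ0 ^ 2 * t ^ 3 := by
        rw [div_mul_eq_mul_div, le_div_iff₀ (by positivity)]
        nlinarith
      have hb2 : t ^ 2 ≤ 1 / θ0 * t ^ 3 := by
        rw [div_mul_eq_mul_div, le_div_iff₀ hθ0]
        nlinarith
      have he : c₁ * t ^ 3 = 3 / θ0 ^ 2 * t ^ 3 + 1 / θ0 * t ^ 3 + 2 * t ^ 3 := by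
        rw [hc₁def]; ring
      linarith
    obtain ⟨x, hxdef⟩ : ∃ c : ℝ, c = Real.log (Pf t n) := ⟨_, rfl⟩
    obtain ⟨x₀, hx0def⟩ : ∃ c : ℝ, c = t * (t - 1) / (2 * n) := ⟨_, rfl⟩
    rw [← hxdef, ← hx0def] at hE
    obtain ⟨s, hsdef⟩ : ∃ c : ℝ, c = t ^ 2 / (n:ℝ) := ⟨_, rfl⟩
    rw [← hsdef] at h2
    have hs0 : 0 ≤ s := by rw [hsdef]; positivity
    obtain ⟨r, hrdef⟩ : ∃ c : ℝ, c = t / (n:ℝ) := ⟨_, rfl⟩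
    have hr0 : 0 ≤ r := by rw [hrdef]; positivity
    have hr2 : r ≤ 1 / 2 := by
      rw [hrdef, div_le_div_iff₀ hn0 two_pos]; linarith
    have hE' : |x - x₀| ≤ c₁ * s * r := by
      have hid : c₁ * t ^ 3 / (n:ℝ) ^ 2 = c₁ * s * r := by
        rw [hsdef, hrdef]; field_simp
      rw [← hid]
      refine hE.trans ?_
      exact div_le_div_of_nonneg_right hb (by positivity)
    have hx0b : |x₀| ≤ K * s := by
      rw [hx0def, abs_div, abs_of_pos (by linarith : (0:ℝ) < 2 * n), abs_mul,
        abs_of_pos ht, div_le_iff₀ (by linarith : (0:ℝ) < 2 * n)]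
      have habs : |t - 1| ≤ t + t / θ0 := by
        rw [abs_le]
        constructor
        · have : 1 ≤ t / θ0 := (one_le_div hθ0).mpr htθ0
          linarith
        · have : 0 ≤ t / θ0 := by positivity
          linarith
      have hKn : K * s * (2 * n) = (1 + 1 / θ0) * t ^ 2 := by
        rw [hKdef, hsdef]; field_simp
      rw [hKn]
      have he2 : (1 + 1 / θ0) * t ^ 2 = t * (t + t / θ0) := by field_simp
      rw [he2]
      exact mul_le_mul_of_nonneg_left habs ht.le
    have hδ1 : δ ≤ 1 := hδdef ▸ min_le_left _ _
    have hδ2 : (K + c₁ / 2 + 1) * δ ≤ 1 := by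
      have hm := hδdef ▸ min_le_right 1 (1 / (K + c₁ / 2 + 1))
      calc (K + c₁ / 2 + 1) * δ ≤ (K + c₁ / 2 + 1) * (1 / (K + c₁ / 2 + 1)) :=
            mul_le_mul_of_nonneg_left hm (by positivity)
        _ = 1 := by field_simp
    have hxabs : |x| ≤ K * s + c₁ * s * r := by
      have htr := abs_add_le x₀ (x - x₀)
      simp only [add_sub_cancel] at htr
      linarith [hE', hx0b]
    have hx1 : |x| ≤ 1 := by
      have hsr : s * r ≤ δ * (1 / 2) := mul_le_mul h2 hr2 hr0 hδ.le
      have ha1 : K * s ≤ K * δ := mul_le_mul_of_nonneg_left h2 hK.le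
      have ha2 : c₁ * s * r ≤ c₁ * (δ * (1 / 2)) := by
        rw [mul_assoc]
        exact mul_le_mul_of_nonneg_left hsr hc₁.le
      linarith [hδ.le]
    have hexp := Real.abs_exp_sub_one_sub_id_le hx1
    have hPexp : Pf t n = Real.exp x := by
      rw [hxdef]; exact (Real.exp_log (Pf_pos ht (by omega))).symm
    have hmain : |Pf t n - (1 + x₀)| ≤ C * (t ^ 4 / (n:ℝ) ^ 2) := by
      have tri : |Pf t n - (1 + x₀)| ≤ x ^ 2 + |x - x₀| := by
        have e : Pf t n - (1 + x₀) = (Real.exp x - 1 - x) + (x - x₀) := by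
          rw [hPexp]; ring
        rw [e]
        calc |(Real.exp x - 1 - x) + (x - x₀)| ≤ |Real.exp x - 1 - x| + |x - x₀| := abs_add_le _ _
          _ ≤ x ^ 2 + |x - x₀| := by linarith
      have hsq2 : s ^ 2 = t ^ 4 / (n:ℝ) ^ 2 := by rw [hsdef]; field_simp
      have hxsq : x ^ 2 ≤ 2 * (K * s) ^ 2 + 2 * (c₁ * s * r) ^ 2 :=
        (sq_le_of_abs_le' hxabs).trans (add_sq_le' _ _)
      have hEfin : |x - x₀| ≤ c₁ / θ0 * (t ^ 4 / (n:ℝ) ^ 2) := by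
        refine hE'.trans ?_
        have e1 : c₁ * s * r = c₁ * (t ^ 3 / (n:ℝ) ^ 2) := by
          rw [hsdef, hrdef]; field_simp
        have e2 : c₁ / θ0 * (t ^ 4 / (n:ℝ) ^ 2) = c₁ * ((t ^ 4 / θ0) / (n:ℝ) ^ 2) := by
          field_simp
        rw [e1, e2]
        apply mul_le_mul_of_nonneg_left ?_ hc₁.le
        apply div_le_div_of_nonneg_right ?_ (by positivity)
        rw [le_div_iff₀ hθ0]
        have := mul_le_mul_of_nonneg_left htθ0 (pow_nonneg ht.le 3)
        linarith
      have hrr : r ^ 2 ≤ 1 := by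
        have h := mul_le_mul hr2 hr2 hr0 (by norm_num : (0:ℝ) ≤ 1/2)
        rw [pow_two]; linarith
      calc |Pf t n - (1 + x₀)| ≤ x ^ 2 + |x - x₀| := tri
        _ ≤ (2 * K ^ 2 + 2 * c₁ ^ 2) * s ^ 2 + c₁ / θ0 * (t ^ 4 / (n:ℝ) ^ 2) := by
            have hcr : (c₁ * s * r) ^ 2 ≤ (c₁ * s) ^ 2 := by
              have h := mul_le_mul_of_nonneg_left hrr (sq_nonneg (c₁ * s))
              calc (c₁ * s * r) ^ 2 = (c₁ * s) ^ 2 * r ^ 2 := by ring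
                _ ≤ (c₁ * s) ^ 2 * 1 := h
                _ = (c₁ * s) ^ 2 := mul_one _
            linarith [hxsq, hEfin]
        _ = C * (t ^ 4 / (n:ℝ) ^ 2) := by rw [hsq2, hCdef]; ring
    -- convert to the stated form
    have hrp : (0:ℝ) < (n:ℝ) ^ (t - 1) := Real.rpow_pos_of_pos hn0 _
    have hfact : Real.Gamma t * (∏ i ∈ Finset.range n, (t + i)) / (Nat.factorial n) =
        (n:ℝ) ^ (t - 1) * Pf t n := by
      rw [Pf]
      field_simp
    rw [hfact]
    have e : (n:ℝ) ^ (t - 1) * Pf t n - (n:ℝ) ^ (t - 1) * (1 + t * (t - 1) / (2 * n)) =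
        (n:ℝ) ^ (t - 1) * (Pf t n - (1 + x₀)) := by rw [hx0def]; ring
    rw [e, abs_mul, abs_of_pos hrp]
    calc (n:ℝ) ^ (t - 1) * |Pf t n - (1 + x₀)| ≤
          (n:ℝ) ^ (t - 1) * (C * (t ^ 4 / (n:ℝ) ^ 2)) :=
            mul_le_mul_of_nonneg_left hmain hrp.le
      _ = C * ((n:ℝ) ^ (t - 1) * t ^ 4 / (n:ℝ) ^ 2) := by ring
  obtain ⟨N, hN⟩ := eventually_atTop.mp hev
  exact ⟨N, hN⟩
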